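/- Let G = (V,E) be a graph with minimum scaled sparsest cut λ*. For every λ > λ*, any partition minimizing the standard LambdaCC objective with parameter λ has at least two clusters, and every cluster S in it satisfies cut(S)/(|S||V∖S|) ≤ λ. -/

import Mathlib

open Finset

/-- The number of edges of `G` between `S` and its complement. -/
def cutval {V : Type*} [Fintype V] [DecidableEq V]
    (G : SimpleGraph V) [DecidableRel G.Adj] (S : Finset V) : ℕ :=
  ((S ×ˢ Sᶜ).filter fun p => G.Adj p.1 p.2).card

/-- The standard LambdaCC objective of the clustering given by `c` (two nodes are
co-clustered iff they have the same `c`-value): each cut edge costs `1 - λ` and each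
co-clustered non-adjacent pair costs `λ`.  Each unordered pair is counted once
via `1/2 · offDiag`. -/
noncomputable def lamCC {V : Type*} [Fintype V] [DecidableEq V]
    (G : SimpleGraph V) [DecidableRel G.Adj] (lam : ℝ) (c : V → ℕ) : ℝ :=
  (1 / 2) * ∑ p ∈ Finset.univ.offDiag,
    (if G.Adj p.1 p.2 then (if c p.1 = c p.2 then 0 else 1 - lam)
     else (if c p.1 = c p.2 then lam else 0))

/-- The number of edges of `G` from `A` to `B` (ordered pairs). -/
def ecount {V : Type*} [Fintype V] [DecidableEq V]
    (G : SimpleGraph V) [DecidableRel G.Adj] (A B : Finset V) : ℕ :=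
  ((A ×ˢ B).filter fun p => G.Adj p.1 p.2).card

section Aux

variable {V : Type*} [Fintype V] [DecidableEq V]
    (G : SimpleGraph V) [DecidableRel G.Adj]

lemma ecount_symm (A B : Finset V) : ecount G A B = ecount G B A := by
  unfold ecount
  apply Finset.card_bij' (fun p _ => p.swap) (fun p _ => p.swap)
  · intro p _; rfl
  · intro p _; rfl
  · intro p hp; simp only [mem_filter, mem_product] at hp ⊢
    exact ⟨⟨hp.1.2, hp.1.1⟩, hp.2.symm⟩
  · intro p hp; simp only [mem_filter, mem_product] at hp ⊢
    exact ⟨⟨hp.1.2, hp.1.1⟩, hp.2.symm⟩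

lemma sum_cross (lam : ℝ) (A B : Finset V) (hd : Disjoint A B) :
    ∑ p ∈ (A ×ˢ B) ∪ (B ×ˢ A), ((if G.Adj p.1 p.2 then (1:ℝ) else 0) - lam)
      = 2 * ((ecount G A B : ℝ) - lam * A.card * B.card) := by
  have hdp : Disjoint (A ×ˢ B) (B ×ˢ A) := by
    rw [Finset.disjoint_left]
    rintro ⟨u, v⟩ h1 h2
    simp only [mem_product] at h1 h2
    exact (Finset.disjoint_left.1 hd h1.1) h2.1
  rw [Finset.sum_union hdp]
  have key : ∀ C D : Finset V, ∑ p ∈ C ×ˢ D, ((if G.Adj p.1 p.2 then (1:ℝ) else 0) - lam)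
      = (ecount G C D : ℝ) - lam * C.card * D.card := by
    intro C D
    rw [Finset.sum_sub_distrib, Finset.sum_boole, Finset.sum_const, Finset.card_product]
    unfold ecount
    ring
  rw [key, key, ecount_symm G B A]
  ring

/-- If `c` and `c'` induce the same co-clustering outside `B`, and on `B`
`c` co-clusters but `c'` does not, the difference of objectives is a simple sum. -/
lemma lamCC_diff (lam : ℝ) (c c' : V → ℕ) (B : Finset (V × V))
    (hB : B ⊆ Finset.univ.offDiag)
    (hout : ∀ p ∈ Finset.univ.offDiag, p ∉ B → ((c' p.1 = c' p.2) ↔ (c p.1 = c p.2)))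
    (hin : ∀ p ∈ B, c p.1 = c p.2 ∧ ¬ (c' p.1 = c' p.2)) :
    lamCC G lam c' - lamCC G lam c
      = (1 / 2) * ∑ p ∈ B, ((if G.Adj p.1 p.2 then (1:ℝ) else 0) - lam) := by
  unfold lamCC
  rw [← mul_sub, ← Finset.sum_sub_distrib]
  congr 1
  rw [← Finset.sum_subset hB]
  · apply Finset.sum_congr rfl
    intro p hp
    obtain ⟨h1, h2⟩ := hin p hp
    rw [if_neg h2, if_neg h2, if_pos h1, if_pos h1]
    by_cases hA : G.Adj p.1 p.2 <;> simp [hA]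
  · intro p hp hpB
    rw [sub_eq_zero]
    by_cases he : c p.1 = c p.2
    · rw [if_pos he, if_pos he, if_pos ((hout p hp hpB).2 he), if_pos ((hout p hp hpB).2 he)]
    · have he' : ¬ (c' p.1 = c' p.2) := fun h => he ((hout p hp hpB).1 h)
      rw [if_neg he, if_neg he, if_neg he', if_neg he']

/-- decomposition of the cut count over the other clusters -/
lemma cut_decomp (c : V → ℕ) (k : ℕ) :
    ecount G (Finset.univ.filter fun v => c v = k) (Finset.univ.filter fun v => c v = k)ᶜ
      = ∑ l ∈ (Finset.univ.image c).erase k,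
          ecount G (Finset.univ.filter fun v => c v = k) (Finset.univ.filter fun v => c v = l) := by
  classical
  unfold ecount
  rw [← Finset.card_biUnion]
  · congr 1
    ext ⟨u, v⟩
    simp only [mem_biUnion, mem_filter, mem_product, mem_compl, mem_erase, mem_image,
      mem_univ, true_and]
    constructor
    · rintro ⟨⟨hu, hv⟩, hadj⟩
      exact ⟨c v, ⟨fun h => hv (h ▸ rfl), ⟨v, rfl⟩⟩, ⟨hu, rfl⟩, hadj⟩
    · rintro ⟨l, ⟨hlk, _⟩, ⟨hu, hv⟩, hadj⟩
      exact ⟨⟨hu, fun h => hlk (hv ▸ h ▸ rfl)⟩, hadj⟩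
  · intro l _ l' _ hll'
    rw [Function.onFun, Finset.disjoint_left]
    rintro ⟨u, v⟩ h1 h2
    simp only [mem_filter, mem_product, mem_univ, true_and] at h1 h2
    exact hll' (h1.1.2 ▸ h2.1.2 ▸ rfl)

lemma compl_decomp (c : V → ℕ) (k : ℕ) :
    (Finset.univ.filter fun v => c v = k)ᶜ.card
      = ∑ l ∈ (Finset.univ.image c).erase k,
          (Finset.univ.filter fun v => c v = l).card := by
  classical
  rw [← Finset.card_biUnion]
  · congr 1
    ext v
    simp only [mem_biUnion, mem_filter, mem_compl, mem_erase, mem_image, mem_univ, true_and]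
    constructor
    · intro hv
      exact ⟨c v, ⟨fun h => hv (h ▸ rfl), ⟨v, rfl⟩⟩, rfl⟩
    · rintro ⟨l, ⟨hlk, _⟩, hv⟩
      exact fun h => hlk (hv ▸ h ▸ rfl)
  · intro l _ l' _ hll'
    rw [Function.onFun, Finset.disjoint_left]
    intro v h1 h2
    simp only [mem_filter, mem_univ, true_and] at h1 h2
    exact hll' (h1 ▸ h2 ▸ rfl)

/-- the merge-move bound: merging two distinct clusters of an optimal clustering
cannot help, hence the edge count between them is at most `lam` times the
product of their sizes. -/
lemma merge_bound (lam : ℝ) (c : V → ℕ)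
    (hopt : ∀ c' : V → ℕ, lamCC G lam c ≤ lamCC G lam c') (k l : ℕ) (hkl : k ≠ l) :
    (ecount G (Finset.univ.filter fun v => c v = k) (Finset.univ.filter fun v => c v = l) : ℝ)
      ≤ lam * (Finset.univ.filter fun v => c v = k).card
          * (Finset.univ.filter fun v => c v = l).card := by
  classical
  set Sk := Finset.univ.filter fun v => c v = k with hSk
  set Sl := Finset.univ.filter fun v => c v = l with hSl
  have hd : Disjoint Sk Sl := by
    rw [Finset.disjoint_left]
    intro v h1 h2
    simp only [hSk, hSl, mem_filter, mem_univ, true_and] at h1 h2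
    exact hkl (h1 ▸ h2 ▸ rfl)
  set c'' : V → ℕ := fun v => if c v = k then l else c v with hc''
  set B : Finset (V × V) := (Sk ×ˢ Sl) ∪ (Sl ×ˢ Sk) with hBdef
  have hmemB : ∀ p : V × V, p ∈ B ↔
      ((c p.1 = k ∧ c p.2 = l) ∨ (c p.1 = l ∧ c p.2 = k)) := by
    intro p
    simp [hBdef, hSk, hSl, mem_union, mem_product, mem_filter]
  have hB : B ⊆ Finset.univ.offDiag := by
    intro p hp
    rw [hmemB] at hp
    simp only [Finset.mem_offDiag, mem_univ, true_and]
    rcases hp with ⟨h1, h2⟩ | ⟨h1, h2⟩ <;> exact fun h => hkl (by rw [h] at h1; omega)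
  have hout : ∀ p ∈ Finset.univ.offDiag, p ∉ B → ((c p.1 = c p.2) ↔ (c'' p.1 = c'' p.2)) := by
    intro p _ hpB
    rw [hmemB] at hpB
    push_neg at hpB
    simp only [hc'']
    by_cases h1 : c p.1 = k <;> by_cases h2 : c p.2 = k <;> simp [h1, h2] <;> omega
  have hin : ∀ p ∈ B, c'' p.1 = c'' p.2 ∧ ¬ (c p.1 = c p.2) := by
    intro p hp
    rw [hmemB] at hp
    rcases hp with ⟨h1, h2⟩ | ⟨h1, h2⟩ <;> simp [hc'', h1, h2, hkl] <;> omega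
  have hdiff := lamCC_diff G lam c'' c B hB hout hin
  rw [hBdef, sum_cross G lam Sk Sl hd] at hdiff
  have h0 := hopt c''
  nlinarith [hdiff, h0]

end Aux

/-- If `λ` exceeds the minimum scaled sparsest cut `λ*`, then any clustering
minimizing the standard LambdaCC objective has at least two clusters, and every
cluster has scaled sparsest cut at most `λ`. -/
theorem optimal_lamCC_of_lam_gt_sparsestCut {V : Type*} [Fintype V] [DecidableEq V]
    (G : SimpleGraph V) [DecidableRel G.Adj] (lam lamstar : ℝ)
    (hlam0 : 0 < lam) (hlam1 : lam < 1)
    (hstar_attained : ∃ S : Finset V, S.Nonempty ∧ S ≠ Finset.univ ∧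
      (cutval G S : ℝ) / ((S.card : ℝ) * (Sᶜ.card : ℝ)) = lamstar)
    (hstar_min : ∀ S : Finset V, S.Nonempty → S ≠ Finset.univ →
      lamstar ≤ (cutval G S : ℝ) / ((S.card : ℝ) * (Sᶜ.card : ℝ)))
    (hgt : lamstar < lam)
    (c : V → ℕ) (hopt : ∀ c' : V → ℕ, lamCC G lam c ≤ lamCC G lam c') :
    2 ≤ (Finset.univ.image c).card ∧
      ∀ k ∈ Finset.univ.image c,
        (cutval G (Finset.univ.filter fun v => c v = k) : ℝ)
            / (((Finset.univ.filter fun v => c v = k).card : ℝ)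
                * ((Finset.univ.filter fun v => c v = k)ᶜ.card : ℝ)) ≤ lam := by
  classical
  obtain ⟨S, hSne, hSuniv, hSeq⟩ := hstar_attained
  have haS : 0 < (S.card : ℝ) := by exact_mod_cast Finset.card_pos.2 hSne
  have hbS : 0 < ((Sᶜ).card : ℝ) := by
    exact_mod_cast Finset.card_pos.2 (Finset.nonempty_iff_ne_empty.2
      fun h => hSuniv ((Finset.compl_eq_empty_iff S).1 h))
  have hcutS : (cutval G S : ℝ) = lamstar * ((S.card : ℝ) * (Sᶜ.card : ℝ)) :=
    (div_eq_iff (by positivity)).1 hSeq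
  constructor
  · -- at least two clusters
    by_contra hcard
    push_neg at hcard
    obtain ⟨x, hxS⟩ := hSne
    have hne : (Finset.univ.image c).Nonempty := ⟨c x, Finset.mem_image_of_mem c (mem_univ x)⟩
    have h1 : (Finset.univ.image c).card = 1 :=
      le_antisymm (by omega) (Finset.card_pos.2 hne)
    obtain ⟨k₀, hk₀⟩ := Finset.card_eq_one.1 h1
    have hconst : ∀ v : V, c v = k₀ := by
      intro v
      have : c v ∈ Finset.univ.image c := Finset.mem_image_of_mem c (mem_univ v)
      rw [hk₀, Finset.mem_singleton] at this
      exact this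
    set c' : V → ℕ := fun v => if v ∈ S then 0 else 1 with hc'
    set B : Finset (V × V) := (S ×ˢ Sᶜ) ∪ (Sᶜ ×ˢ S) with hBdef
    have hmemB : ∀ p : V × V, p ∈ B ↔
        ((p.1 ∈ S ∧ p.2 ∉ S) ∨ (p.1 ∉ S ∧ p.2 ∈ S)) := by
      intro p
      simp [hBdef, mem_union, mem_product, mem_compl]
    have hB : B ⊆ Finset.univ.offDiag := by
      intro p hp
      rw [hmemB] at hp
      simp only [Finset.mem_offDiag, mem_univ, true_and]
      rcases hp with ⟨h1, h2⟩ | ⟨h1, h2⟩ <;> exact fun h => by rw [h] at h1; exact absurd h1 (by tauto)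
    have hout : ∀ p ∈ Finset.univ.offDiag, p ∉ B → ((c' p.1 = c' p.2) ↔ (c p.1 = c p.2)) := by
      intro p _ hpB
      rw [hmemB] at hpB
      push_neg at hpB
      simp only [hc']
      rw [hconst p.1, hconst p.2]
      by_cases h1 : p.1 ∈ S <;> by_cases h2 : p.2 ∈ S <;> simp [h1, h2] <;> tauto
    have hin : ∀ p ∈ B, c p.1 = c p.2 ∧ ¬ (c' p.1 = c' p.2) := by
      intro p hp
      rw [hmemB] at hp
      refine ⟨by rw [hconst p.1, hconst p.2], ?_⟩
      rcases hp with ⟨h1, h2⟩ | ⟨h1, h2⟩ <;> simp [hc', h1, h2]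
    have hdiff := lamCC_diff G lam c c' B hB hout hin
    rw [hBdef, sum_cross G lam S Sᶜ disjoint_compl_right] at hdiff
    have hcv : ecount G S Sᶜ = cutval G S := rfl
    rw [hcv] at hdiff
    have h0 := hopt c'
    nlinarith [hdiff, h0, mul_pos haS hbS]
  · -- each cluster has sparsity at most lam
    intro k hk
    set Sk := Finset.univ.filter fun v => c v = k with hSkdef
    have hkey : (cutval G Sk : ℝ) ≤ lam * (Sk.card : ℝ) * ((Skᶜ).card : ℝ) := by
      have hcv : cutval G Sk = ecount G Sk Skᶜ := rfl
      rw [hcv, cut_decomp G c k, compl_decomp (V := V) c k]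
      push_cast
      rw [Finset.mul_sum]
      apply Finset.sum_le_sum
      intro l hl
      have hlk : k ≠ l := fun h => (Finset.mem_erase.1 hl).1 h.symm
      have := merge_bound G lam c hopt k l hlk
      exact this.trans_eq (by ring)
    by_cases hz : ((Sk.card : ℝ) * ((Skᶜ).card : ℝ)) = 0
    · rw [hz, div_zero]
      exact hlam0.le
    · have hpos : 0 < (Sk.card : ℝ) * ((Skᶜ).card : ℝ) :=
        lt_of_le_of_ne (mul_nonneg (Nat.cast_nonneg _) (Nat.cast_nonneg _)) (Ne.symm hz)
      rw [div_le_iff₀ hpos]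
      nlinarith [hkey]
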